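/- For all complex numbers $z,\zeta$ and every integer $n\ge 2$, the identity $\prod_{j=2}^n (j-z-\zeta) = \sum_{j=1}^n \binom{n-1}{j-1} \prod_{l=1}^{n-j}(l-z) \cdot \prod_{k=1}^{j-1}(k-\zeta)$ holds, where empty products equal $1$. -/
import Mathlib


open Finset

private lemma asc_vandermonde (a b : ℂ) (N : ℕ) :
    ∏ m ∈ range N, (a + b + (m : ℂ)) =
      ∑ i ∈ range (N + 1), ((N.choose i : ℕ) : ℂ) *
        (∏ l ∈ range (N - i), (a + (l : ℂ))) * (∏ k ∈ range i, (b + (k : ℂ))) := by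
  induction N with
  | zero => simp
  | succ N ih =>
    rw [prod_range_succ, ih]
    rw [Finset.sum_range_succ' (fun i => ((N + 1).choose i : ℂ) *
        (∏ l ∈ range (N + 1 - i), (a + (l : ℂ))) * (∏ k ∈ range i, (b + (k : ℂ))))]
    have h1 : ∀ i ∈ range (N + 1),
        (((N + 1).choose (i + 1) : ℕ) : ℂ) *
          (∏ l ∈ range (N + 1 - (i + 1)), (a + (l : ℂ))) *
          (∏ k ∈ range (i + 1), (b + (k : ℂ))) =
        ((N.choose i : ℕ) : ℂ) * (∏ l ∈ range (N - i), (a + (l : ℂ))) *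
          (∏ k ∈ range i, (b + (k : ℂ))) * (b + (i : ℂ)) +
        ((N.choose (i + 1) : ℕ) : ℂ) * (∏ l ∈ range (N - i), (a + (l : ℂ))) *
          (∏ k ∈ range i, (b + (k : ℂ))) * (b + (i : ℂ)) := by
      intro i hi
      rw [Nat.choose_succ_succ, Nat.cast_add, Nat.succ_sub_succ, prod_range_succ]
      simp only [Nat.succ_eq_add_one, Nat.add_comm 1]
      ring
    rw [Finset.sum_congr rfl h1, Finset.sum_add_distrib]
    conv_rhs => rw [add_assoc]
    have h2 : (∑ i ∈ range (N + 1), ((N.choose (i + 1) : ℕ) : ℂ) *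
          (∏ l ∈ range (N - i), (a + (l : ℂ))) * (∏ k ∈ range i, (b + (k : ℂ)))
          * (b + (i : ℂ)))
        + (((N + 1).choose 0 : ℕ) : ℂ) * (∏ l ∈ range (N + 1 - 0), (a + (l : ℂ))) *
          (∏ k ∈ range 0, (b + (k : ℂ))) =
        ∑ i ∈ range (N + 1), ((N.choose i : ℕ) : ℂ) *
          (∏ l ∈ range (N - i), (a + (l : ℂ))) * (∏ k ∈ range i, (b + (k : ℂ))) *
          (a + ((N - i : ℕ) : ℂ)) := by
      have e1 : (∑ i ∈ range (N + 1), ((N.choose (i + 1) : ℕ) : ℂ) *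
            (∏ l ∈ range (N - i), (a + (l : ℂ))) * (∏ k ∈ range i, (b + (k : ℂ)))
            * (b + (i : ℂ)))
          + (((N + 1).choose 0 : ℕ) : ℂ) * (∏ l ∈ range (N + 1 - 0), (a + (l : ℂ))) *
            (∏ k ∈ range 0, (b + (k : ℂ))) =
          ∑ i ∈ range (N + 2), ((N.choose i : ℕ) : ℂ) *
            (∏ l ∈ range (N + 1 - i), (a + (l : ℂ))) * (∏ k ∈ range i, (b + (k : ℂ))) := by
        rw [Finset.sum_range_succ' (fun i => ((N.choose i : ℕ) : ℂ) *
            (∏ l ∈ range (N + 1 - i), (a + (l : ℂ))) * (∏ k ∈ range i, (b + (k : ℂ))))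
            (N + 1)]
        congr 1
        · apply Finset.sum_congr rfl
          intro i hi
          rw [Nat.succ_sub_succ, prod_range_succ]
          ring
        · simp
      rw [e1, Finset.sum_range_succ, Nat.choose_succ_self]
      simp only [Nat.cast_zero, zero_mul, add_zero]
      apply Finset.sum_congr rfl
      intro i hi
      have hiN : i ≤ N := Nat.lt_succ_iff.mp (Finset.mem_range.mp hi)
      rw [Nat.succ_sub hiN, prod_range_succ]
      ring
    rw [h2, ← Finset.sum_add_distrib]
    rw [Finset.sum_mul]
    apply Finset.sum_congr rfl
    intro i hi
    have hiN : i ≤ N := Nat.lt_succ_iff.mp (Finset.mem_range.mp hi)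
    rw [Nat.cast_sub hiN]
    ring

theorem stmt2 (z ζ : ℂ) (n : ℕ) (hn : 2 ≤ n) :
    ∏ j ∈ Finset.Icc 2 n, ((j : ℂ) - z - ζ) =
      ∑ j ∈ Finset.Icc 1 n, ((Nat.choose (n - 1) (j - 1) : ℕ) : ℂ) *
        (∏ l ∈ Finset.Icc 1 (n - j), ((l : ℂ) - z)) *
        (∏ k ∈ Finset.Icc 1 (j - 1), ((k : ℂ) - ζ)) := by
  have key := asc_vandermonde (1 - z) (1 - ζ) (n - 1)
  have hprodIcc : ∀ (c : ℂ) (m : ℕ),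
      ∏ k ∈ Finset.Icc 1 m, ((k : ℂ) - c) = ∏ k ∈ range m, ((1 - c) + (k : ℂ)) := by
    intro c m
    rw [← Finset.Ico_add_one_right_eq_Icc, Finset.prod_Ico_eq_prod_range]
    have hm : m + 1 - 1 = m := by omega
    rw [hm]
    apply Finset.prod_congr rfl
    intro k _
    push_cast
    ring
  have hL : ∏ j ∈ Finset.Icc 2 n, ((j : ℂ) - z - ζ) =
      ∏ m ∈ range (n - 1), ((1 - z) + (1 - ζ) + (m : ℂ)) := by
    rw [← Finset.Ico_add_one_right_eq_Icc, Finset.prod_Ico_eq_prod_range]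
    have hm : n + 1 - 2 = n - 1 := by omega
    rw [hm]
    apply Finset.prod_congr rfl
    intro m _
    push_cast
    ring
  have hR : ∑ j ∈ Finset.Icc 1 n, ((Nat.choose (n - 1) (j - 1) : ℕ) : ℂ) *
        (∏ l ∈ Finset.Icc 1 (n - j), ((l : ℂ) - z)) *
        (∏ k ∈ Finset.Icc 1 (j - 1), ((k : ℂ) - ζ)) =
      ∑ i ∈ range (n - 1 + 1), (((n - 1).choose i : ℕ) : ℂ) *
        (∏ l ∈ range (n - 1 - i), ((1 - z) + (l : ℂ))) *
        (∏ k ∈ range i, ((1 - ζ) + (k : ℂ))) := by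
    rw [← Finset.Ico_add_one_right_eq_Icc, Finset.sum_Ico_eq_sum_range]
    have hm : n + 1 - 1 = n - 1 + 1 := by omega
    rw [hm]
    apply Finset.sum_congr rfl
    intro i hi
    rw [Finset.mem_range] at hi
    have e0 : 1 + i - 1 = i := by omega
    have e1 : n - (1 + i) = n - 1 - i := by omega
    rw [e0, e1, hprodIcc, hprodIcc]
  rw [hL, hR, key]
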